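/- arXiv:2503.14785 — 2 statements merged into one kernel-verified Lean document; each statement's English description precedes it below -/
import Mathlib

section
/- Let f(z) = ∑_{k≥0} aₖ zᵏ be a power series with nonnegative coefficients aₖ ≥ 0 and radius of convergence R > 0. If Z = [zᵢⱼ] ∈ ℝ^{n×n} is symmetric positive semi-definite with |zᵢⱼ| < R for all i,j, then the matrix [f(zᵢⱼ)] obtained by applying f entrywise is symmetric positive semi-definite. -/
lemma hadamard_pow_quad_nonneg {n : ℕ} (Z : Matrix (Fin n) (Fin n) ℝ)
    (hZ : Z.PosSemidef) (k : ℕ) (x : Fin n → ℝ) :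
    0 ≤ ∑ i, ∑ j, x i * (Z i j) ^ k * x j := by
  induction k generalizing x with
  | zero =>
    simp only [pow_zero, mul_one]
    have h : (∑ i, x i) * (∑ j, x j) = ∑ i, ∑ j, x i * x j := by
      rw [Finset.sum_mul_sum]
    rw [← h]
    exact mul_self_nonneg _
  | succ k ih =>
    open scoped MatrixOrder Matrix.Norms.L2Operator in
    obtain ⟨B, hB⟩ := CStarAlgebra.nonneg_iff_eq_star_mul_self.mp hZ.nonneg
    have hZij : ∀ i j, Z i j = ∑ l, B l i * B l j := by
      intro i j
      rw [hB]
      simp [Matrix.mul_apply, Matrix.conjTranspose_apply, Matrix.star_apply]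
    have step : ∀ i j, x i * (Z i j) ^ (k + 1) * x j
        = ∑ l, (B l i * x i) * (Z i j) ^ k * (B l j * x j) := by
      intro i j
      calc x i * (Z i j) ^ (k + 1) * x j
          = ∑ l, (B l i * B l j) * (x i * (Z i j) ^ k * x j) := by
            rw [← Finset.sum_mul, ← hZij i j]; ring
        _ = ∑ l, (B l i * x i) * (Z i j) ^ k * (B l j * x j) :=
            Finset.sum_congr rfl fun l _ => by ring
    calc (0:ℝ) ≤ ∑ l, ∑ i, ∑ j, (B l i * x i) * (Z i j) ^ k * (B l j * x j) :=
          Finset.sum_nonneg fun l _ => ih (fun i => B l i * x i)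
      _ = ∑ i, ∑ l, ∑ j, (B l i * x i) * (Z i j) ^ k * (B l j * x j) :=
          Finset.sum_comm
      _ = ∑ i, ∑ j, ∑ l, (B l i * x i) * (Z i j) ^ k * (B l j * x j) :=
          Finset.sum_congr rfl fun i _ => Finset.sum_comm
      _ = ∑ i, ∑ j, x i * (Z i j) ^ (k + 1) * x j :=
          Finset.sum_congr rfl fun i _ => Finset.sum_congr rfl fun j _ => (step i j).symm

theorem entrywise_power_series_posSemidef {n : ℕ} (a : ℕ → ℝ) (R : ℝ)
    (hR : 0 < R) (ha : ∀ k, 0 ≤ a k)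
    (hconv : ∀ x : ℝ, |x| < R → Summable (fun k => a k * x ^ k))
    (Z : Matrix (Fin n) (Fin n) ℝ) (hZ : Z.PosSemidef)
    (hbound : ∀ i j, |Z i j| < R) :
    (Matrix.of fun i j => ∑' k, a k * (Z i j) ^ k).PosSemidef := by
  have hsym : ∀ i j, Z j i = Z i j := fun i j => by
    have h := congrFun (congrFun hZ.1 j) i
    simpa [Matrix.conjTranspose_apply] using h.symm
  rw [Matrix.posSemidef_iff_dotProduct_mulVec]
  constructor
  · ext i j
    simp only [Matrix.conjTranspose_apply, Matrix.of_apply, star_trivial, hsym]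
  · intro x
    have hsummable : ∀ i j, Summable (fun k => x i * (a k * (Z i j) ^ k * x j)) := by
      intro i j
      exact (((hconv _ (hbound i j)).mul_right (x j)).mul_left (x i))
    have key : dotProduct (star x) (Matrix.mulVec (Matrix.of fun i j => ∑' k, a k * (Z i j) ^ k) x)
        = ∑' k, ∑ i, ∑ j, x i * (a k * (Z i j) ^ k * x j) := by
      rw [Summable.tsum_finsetSum (fun i _ => (hasSum_sum fun j _ => (hsummable i j).hasSum).summable)]
      simp only [dotProduct, Matrix.mulVec, Matrix.of_apply, star_trivial]
      refine Finset.sum_congr rfl fun i _ => ?_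
      rw [Summable.tsum_finsetSum (fun j _ => hsummable i j)]
      rw [Finset.mul_sum]
      refine Finset.sum_congr rfl fun j _ => ?_
      rw [← tsum_mul_right, ← tsum_mul_left]
    rw [key]
    refine tsum_nonneg fun k => ?_
    have h2 : ∑ i, ∑ j, x i * (a k * (Z i j) ^ k * x j)
        = a k * ∑ i, ∑ j, x i * (Z i j) ^ k * x j := by
      rw [Finset.mul_sum]
      refine Finset.sum_congr rfl fun i _ => ?_
      rw [Finset.mul_sum]
      exact Finset.sum_congr rfl fun j _ => by ring
    rw [h2]
    exact mul_nonneg (ha k) (hadamard_pow_quad_nonneg Z hZ k x)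
end

section
/- If Z = [zᵢⱼ] ∈ ℝ^{n×n} is symmetric positive semi-definite, then the Hadamard exponential matrix [e^{zᵢⱼ}] is symmetric positive semi-definite. -/
open Matrix Finset

lemma quad_expand {n : ℕ} (A : Matrix (Fin n) (Fin n) ℝ) (x : Fin n → ℝ) :
    star x ⬝ᵥ A *ᵥ x = ∑ i, ∑ j, x i * A i j * x j := by
  simp [dotProduct, mulVec, Finset.mul_sum, mul_comm, mul_assoc, mul_left_comm]

lemma schur_psd {n : ℕ} {A B : Matrix (Fin n) (Fin n) ℝ}
    (hA : A.PosSemidef) (hB : B.PosSemidef) :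
    (Matrix.of fun i j => A i j * B i j).PosSemidef := by
  obtain ⟨C, hC⟩ : ∃ C : Matrix (Fin n) (Fin n) ℝ, B = Cᴴ * C := by
    open scoped MatrixOrder in
    exact (CStarAlgebra.nonneg_iff_eq_star_mul_self.mp hB.nonneg).imp fun C hC => by
      rw [hC, star_eq_conjTranspose]
  refine PosSemidef.of_dotProduct_mulVec_nonneg ?_ ?_
  · ext i j
    simp only [conjTranspose_apply, of_apply, star_mul', star_trivial]
    rw [← hA.1.apply i j, ← hB.1.apply i j]
    simp [mul_comm]
  · intro x
    rw [quad_expand]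
    have : ∀ i j, x i * (Matrix.of fun i j => A i j * B i j) i j * x j
        = ∑ r, (x i * C r i) * A i j * (x j * C r j) := by
      intro i j
      simp only [of_apply, hC, Matrix.mul_apply, conjTranspose_apply, star_trivial,
        Finset.mul_sum, Finset.sum_mul]
      apply Finset.sum_congr rfl
      intro r _
      ring
    simp_rw [this]
    rw [show (∑ i, ∑ j, ∑ r, (x i * C r i) * A i j * (x j * C r j))
        = ∑ r, ∑ i, ∑ j, (x i * C r i) * A i j * (x j * C r j) from
      (Finset.sum_congr rfl fun i _ => Finset.sum_comm).trans Finset.sum_comm]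
    apply Finset.sum_nonneg
    intro r _
    have := hA.dotProduct_mulVec_nonneg (fun i => x i * C r i)
    rwa [quad_expand] at this

lemma pow_psd {n : ℕ} {Z : Matrix (Fin n) (Fin n) ℝ} (hZ : Z.PosSemidef) (k : ℕ) :
    (Matrix.of fun i j => (Z i j) ^ k).PosSemidef := by
  induction k with
  | zero =>
    refine PosSemidef.of_dotProduct_mulVec_nonneg ?_ ?_
    · ext i j; simp [conjTranspose_apply]
    · intro x
      rw [quad_expand]
      simp only [of_apply, pow_zero, mul_one]
      simp_rw [← Finset.mul_sum]
      rw [← Finset.sum_mul]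
      exact mul_self_nonneg _
  | succ k ih =>
    have h : (Matrix.of fun i j => (Z i j) ^ (k + 1))
        = Matrix.of fun i j => (Matrix.of fun i j => (Z i j) ^ k) i j * Z i j := by
      ext i j; simp [pow_succ]
    rw [h]
    exact schur_psd ih hZ

theorem hadamard_exp_posSemidef {n : ℕ} (Z : Matrix (Fin n) (Fin n) ℝ)
    (hZ : Z.PosSemidef) :
    (Matrix.of fun i j => Real.exp (Z i j)).PosSemidef := by
  have hexp : ∀ y : ℝ, Real.exp y = ∑' k : ℕ, y ^ k / k.factorial := by
    intro y
    rw [Real.exp_eq_exp_ℝ, NormedSpace.exp_eq_tsum_div]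
  refine PosSemidef.of_dotProduct_mulVec_nonneg ?_ ?_
  · ext i j
    simp only [conjTranspose_apply, of_apply, star_trivial]
    rw [← hZ.1.apply i j]
    simp
  · intro x
    rw [quad_expand]
    have hsum : ∀ i j : Fin n, Summable (fun k : ℕ => x i * x j * ((Z i j) ^ k / k.factorial)) :=
      fun i j => (Real.summable_pow_div_factorial (Z i j)).mul_left _
    have key : ∀ i j : Fin n, x i * (Matrix.of fun i j => Real.exp (Z i j)) i j * x j
        = ∑' k : ℕ, x i * x j * ((Z i j) ^ k / k.factorial) := by
      intro i j
      rw [of_apply, hexp, ← tsum_mul_left, ← tsum_mul_right]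
      congr 1; ext k; ring
    simp_rw [key]
    have inner : ∀ i : Fin n, ∑ j, ∑' k : ℕ, x i * x j * ((Z i j) ^ k / k.factorial)
        = ∑' k : ℕ, ∑ j, x i * x j * ((Z i j) ^ k / k.factorial) :=
      fun i => (Summable.tsum_finsetSum (fun j _ => hsum i j)).symm
    simp_rw [inner]
    rw [← Summable.tsum_finsetSum (fun i (_ : i ∈ Finset.univ) => summable_sum (fun j _ => hsum i j))]
    apply tsum_nonneg
    intro k
    have hq := (pow_psd hZ k).dotProduct_mulVec_nonneg x
    rw [quad_expand] at hq
    simp only [of_apply] at hq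
    have : ∀ i j : Fin n, x i * x j * ((Z i j) ^ k / k.factorial)
        = (k.factorial : ℝ)⁻¹ * (x i * (Z i j) ^ k * x j) := by intro i j; ring
    simp_rw [this, ← Finset.mul_sum]
    exact mul_nonneg (by positivity) hq
end
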